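/- Let n be a positive natural number and work in the ring of formal power series ℚ[[X]]. Let exp denote the exponential power series Σ_{k≥0} X^k/k!, let E₋ be the series obtained from exp by substituting −X for X, and set F = (1 − (1 − exp)^{2n}) · (1 − (1 − E₋)^{2n}). Then the coefficient of X^0 in F is 1, the coefficient of X^k in F is 0 for every k with 1 ≤ k < 2n, and the coefficient of X^{2n} in F is −2. -/

import Mathlib

open PowerSeries

lemma pow_coeffs {f : ℚ⟦X⟧} {c : ℚ} (m : ℕ) (h0 : PowerSeries.constantCoeff (R := ℚ) f = 0)
    (h1 : PowerSeries.coeff (R := ℚ) 1 f = c) :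
    (∀ k < m, PowerSeries.coeff (R := ℚ) k (f ^ m) = 0) ∧
      PowerSeries.coeff (R := ℚ) m (f ^ m) = c ^ m := by
  obtain ⟨g, hg⟩ := PowerSeries.X_dvd_iff.2 h0
  have hc : PowerSeries.constantCoeff (R := ℚ) g = c := by
    have := congrArg (PowerSeries.coeff (R := ℚ) 1) hg
    rw [h1] at this
    simpa [PowerSeries.coeff_succ_X_mul] using this.symm
  have hpow : f ^ m = X ^ m * g ^ m := by rw [hg, mul_pow]
  constructor
  · intro k hk
    rw [hpow, PowerSeries.coeff_X_pow_mul']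
    simp [Nat.not_le_of_lt hk]
  · rw [hpow]
    have := PowerSeries.coeff_X_pow_mul (g ^ m) m 0
    simpa [PowerSeries.coeff_zero_eq_constantCoeff, map_pow, hc] using this

theorem conway_series_of_wheel (n : ℕ) (hn : 0 < n) :
    PowerSeries.coeff (R := ℚ) 0
        ((1 - (1 - PowerSeries.exp ℚ) ^ (2 * n)) *
          (1 - (1 - PowerSeries.rescale (-1 : ℚ) (PowerSeries.exp ℚ)) ^ (2 * n))) = 1 ∧
      (∀ k, 1 ≤ k → k < 2 * n →
        PowerSeries.coeff (R := ℚ) k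
          ((1 - (1 - PowerSeries.exp ℚ) ^ (2 * n)) *
            (1 - (1 - PowerSeries.rescale (-1 : ℚ) (PowerSeries.exp ℚ)) ^ (2 * n))) = 0) ∧
      PowerSeries.coeff (R := ℚ) (2 * n)
        ((1 - (1 - PowerSeries.exp ℚ) ^ (2 * n)) *
          (1 - (1 - PowerSeries.rescale (-1 : ℚ) (PowerSeries.exp ℚ)) ^ (2 * n))) = -2 := by
  set u : ℚ⟦X⟧ := 1 - PowerSeries.exp ℚ with hu
  set w : ℚ⟦X⟧ := 1 - PowerSeries.rescale (-1 : ℚ) (PowerSeries.exp ℚ) with hw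
  have hu0 : PowerSeries.constantCoeff (R := ℚ) u = 0 := by
    simp [hu, PowerSeries.constantCoeff_exp]
  have hu1 : PowerSeries.coeff (R := ℚ) 1 u = -1 := by
    simp [hu, PowerSeries.coeff_exp, PowerSeries.coeff_one]
  have hw0 : PowerSeries.constantCoeff (R := ℚ) w = 0 := by
    rw [← PowerSeries.coeff_zero_eq_constantCoeff_apply, hw, map_sub,
      PowerSeries.coeff_one, PowerSeries.coeff_rescale, PowerSeries.coeff_exp]
    norm_num
  have hw1 : PowerSeries.coeff (R := ℚ) 1 w = 1 := by
    rw [hw, map_sub, PowerSeries.coeff_one, PowerSeries.coeff_rescale,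
      PowerSeries.coeff_exp]
    norm_num
  obtain ⟨hA, hA2⟩ := pow_coeffs (2 * n) hu0 hu1
  obtain ⟨hB, hB2⟩ := pow_coeffs (2 * n) hw0 hw1
  have hA2' : PowerSeries.coeff (R := ℚ) (2 * n) (u ^ (2 * n)) = 1 := by
    rw [hA2]; simp [pow_mul]
  have hB2' : PowerSeries.coeff (R := ℚ) (2 * n) (w ^ (2 * n)) = 1 := by
    rw [hB2]; simp
  -- product expansion
  have hexpand : (1 - u ^ (2 * n)) * (1 - w ^ (2 * n)) =
      1 - u ^ (2 * n) - w ^ (2 * n) + u ^ (2 * n) * w ^ (2 * n) := by ring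
  have hprod : ∀ k ≤ 2 * n, PowerSeries.coeff (R := ℚ) k (u ^ (2 * n) * w ^ (2 * n)) = 0 := by
    intro k hk
    have : X ^ (2 * n) ∣ u ^ (2 * n) := PowerSeries.X_pow_dvd_iff.2 hA
    have h2 : X ^ (2 * n) ∣ w ^ (2 * n) := PowerSeries.X_pow_dvd_iff.2 hB
    have hdvd : X ^ (2 * n + 2 * n) ∣ u ^ (2 * n) * w ^ (2 * n) := by
      rw [pow_add]; exact mul_dvd_mul this h2
    exact PowerSeries.X_pow_dvd_iff.1 hdvd k
      (lt_of_le_of_lt hk (by omega))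
  refine ⟨?_, ?_, ?_⟩
  · rw [hexpand]
    simp only [map_add, map_sub, hA 0 (by omega), hB 0 (by omega), hprod 0 (by omega),
      PowerSeries.coeff_one, if_pos rfl]
    norm_num
  · intro k hk1 hk2
    rw [hexpand]
    have hk0 : k ≠ 0 := by omega
    simp only [map_add, map_sub, hA k hk2, hB k hk2, hprod k (le_of_lt hk2),
      PowerSeries.coeff_one, if_neg hk0]
    ring
  · rw [hexpand]
    have h1 : PowerSeries.coeff (R := ℚ) (2 * n) (1 : ℚ⟦X⟧) = 0 := by
      rw [PowerSeries.coeff_one]; simp; omega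
    simp only [map_add, map_sub, h1, hA2', hB2', hprod (2 * n) le_rfl]
    ring
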